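/- Let R be an LM-system, l → r a rule with root pair (f, g), and s = f(s1,…,sm), t = g(t1,…,tn) terms all of whose proper subterms are R-irreducible. Then s and t are joinable modulo R if and only if s rewrites to t in one step using the rule l → r. -/

import Mathlib

/-! Basic first-order terms, positions, substitutions and rewriting. -/

inductive Term (F : Type) : Type
  | var : Nat → Term F
  | app : F → List (Term F) → Term F

namespace Term

def subst {F : Type} (σ : Nat → Term F) : Term F → Term F
  | var n => σ n
  | app f ts => app f (ts.attach.map fun ⟨t, _⟩ => t.subst σ)

def root {F : Type} : Term F → Option F
  | var _ => none
  | app f _ => some f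

def label {F : Type} : Term F → F ⊕ Nat
  | var n => Sum.inr n
  | app f _ => Sum.inl f

def IsVar {F : Type} : Term F → Prop
  | var _ => True
  | app _ _ => False

def varsL {F : Type} : Term F → List Nat
  | var n => [n]
  | app _ ts => (ts.attach.map fun ⟨t, _⟩ => t.varsL).flatten

end Term

namespace Term

def size {F : Type} : Term F → Nat
  | var _ => 1
  | app _ ts => 1 + (ts.attach.map fun ⟨t, _⟩ => t.size).sum

variable {F : Type}

@[simp] theorem subst_var (σ : Nat → Term F) (n : Nat) : (var n).subst σ = σ n := by rw [subst]

@[simp] theorem subst_app (σ : Nat → Term F) (f : F) (ts : List (Term F)) :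
    (app f ts).subst σ = app f (ts.map fun t => t.subst σ) := by
  rw [subst]; congr 1; exact List.attach_map_val

@[simp] theorem varsL_app (f : F) (ts : List (Term F)) :
    (app f ts).varsL = (ts.map varsL).flatten := by
  rw [varsL]; congr 1; exact List.attach_map_val

theorem size_app (f : F) (ts : List (Term F)) :
    (app f ts).size = 1 + (ts.map size).sum := by
  rw [size]; congr 2; exact List.attach_map_val

theorem size_pos (t : Term F) : 0 < t.size := by
  cases t with
  | var n => rw [size]; exact Nat.one_pos
  | app f ts => rw [size_app]; omega

theorem size_lt_of_mem {t : Term F} {ts : List (Term F)} (h : t ∈ ts) (f : F) :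
    t.size < (app f ts).size := by
  rw [size_app]
  have : t.size ≤ (ts.map size).sum :=
    List.single_le_sum (fun x _ => Nat.zero_le x) _ (List.mem_map_of_mem (f := size) h)
  omega

@[elab_as_elim] theorem indOn {motive : Term F → Prop}
    (hv : ∀ n, motive (var n))
    (ha : ∀ f ts, (∀ t ∈ ts, motive t) → motive (app f ts)) : ∀ t, motive t := by
  have key : ∀ n (t : Term F), t.size ≤ n → motive t := by
    intro n
    induction n with
    | zero => intro t h; have := size_pos t; omega
    | succ n ih =>
      intro t h
      cases t with
      | var k => exact hv k
      | app f ts =>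
        refine ha f ts fun u hu => ih u ?_
        have := size_lt_of_mem hu f
        omega
  exact fun t => key t.size t le_rfl

theorem subst_subst (a b : Nat → Term F) (t : Term F) :
    (t.subst a).subst b = t.subst (fun y => (a y).subst b) := by
  induction t using indOn with
  | hv n => simp
  | ha f ts ih => simp only [subst_app, List.map_map]; congr 1; exact List.map_congr_left fun u hu => ih u hu

theorem subst_id (t : Term F) : t.subst var = t := by
  induction t using indOn with
  | hv n => simp
  | ha f ts ih =>
    simp only [subst_app]
    congr 1
    conv_rhs => rw [← List.map_id ts]
    exact List.map_congr_left fun u hu => ih u hu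

theorem subst_congr {σ σ' : Nat → Term F} {t : Term F}
    (h : ∀ x ∈ t.varsL, σ x = σ' x) : t.subst σ = t.subst σ' := by
  induction t using indOn with
  | hv n => simpa using h n (by simp [varsL])
  | ha f ts ih =>
    simp only [subst_app]
    congr 1
    refine List.map_congr_left fun u hu => ih u hu fun x hx => h x ?_
    simp only [varsL_app, List.mem_flatten]
    exact ⟨u.varsL, List.mem_map_of_mem (f := varsL) hu, hx⟩

theorem mem_varsL_subst {n : Nat} {σ : Nat → Term F} {t : Term F} :
    n ∈ (t.subst σ).varsL ↔ ∃ m ∈ t.varsL, n ∈ (σ m).varsL := by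
  induction t using indOn with
  | hv k => simp [varsL]
  | ha f ts ih =>
    simp only [subst_app, varsL_app, List.mem_flatten, List.mem_map, List.map_map]
    constructor
    · rintro ⟨l, ⟨u, hu, rfl⟩, hn⟩
      rcases (ih u hu).1 hn with ⟨m, hm, hn'⟩
      exact ⟨m, ⟨u.varsL, ⟨u, hu, rfl⟩, hm⟩, hn'⟩
    · rintro ⟨m, ⟨l, ⟨u, hu, rfl⟩, hm⟩, hn⟩
      exact ⟨(u.subst σ).varsL, ⟨u, hu, rfl⟩, (ih u hu).2 ⟨m, hm, hn⟩⟩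

theorem size_subst_le {x : Nat} {σ : Nat → Term F} {t : Term F} (h : x ∈ t.varsL) :
    (σ x).size ≤ (t.subst σ).size := by
  induction t using indOn with
  | hv n => simp [varsL] at h; subst h; simp
  | ha f ts ih =>
    simp only [varsL_app, List.mem_flatten, List.mem_map] at h
    rcases h with ⟨l, ⟨u, hu, rfl⟩, hx⟩
    have h1 := ih u hu hx
    have h2 : (u.subst σ).size ≤ ((ts.map fun t => t.subst σ).map size).sum :=
      List.single_le_sum (fun a _ => Nat.zero_le a) _
        (List.mem_map_of_mem (f := size) (List.mem_map_of_mem hu))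
    rw [subst_app, size_app]; omega

theorem size_subst_lt {x : Nat} {σ : Nat → Term F} {f : F} {ts : List (Term F)}
    (h : x ∈ (app f ts).varsL) : (σ x).size < ((app f ts).subst σ).size := by
  simp only [varsL_app, List.mem_flatten, List.mem_map] at h
  rcases h with ⟨l, ⟨u, hu, rfl⟩, hx⟩
  have h1 := size_subst_le (σ := σ) hx
  have h2 : (u.subst σ).size ≤ ((ts.map fun t => t.subst σ).map size).sum :=
    List.single_le_sum (fun a _ => Nat.zero_le a) _
      (List.mem_map_of_mem (f := size) (List.mem_map_of_mem hu))
  rw [subst_app, size_app]; omega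

end Term


namespace Unif

open Term

variable {F : Type}

def UnifAll (τ : Nat → Term F) (E : List (Term F × Term F)) : Prop :=
  ∀ e ∈ E, e.1.subst τ = e.2.subst τ

def IsMGUL (σ : Nat → Term F) (E : List (Term F × Term F)) : Prop :=
  UnifAll σ E ∧ ∀ τ, UnifAll τ E → ∃ δ, ∀ x, τ x = (σ x).subst δ

def varsE (E : List (Term F × Term F)) : Finset Nat :=
  (E.flatMap fun e => e.1.varsL ++ e.2.varsL).toFinset

theorem mem_varsE {n : Nat} {E : List (Term F × Term F)} :
    n ∈ varsE E ↔ ∃ e ∈ E, n ∈ e.1.varsL ∨ n ∈ e.2.varsL := by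
  simp [varsE, List.mem_flatMap, List.mem_append]

def sizeE (E : List (Term F × Term F)) : Nat :=
  (E.map fun e => e.1.size + e.2.size).sum

/-- elementary substitution -/
def bindVar (x : Nat) (t : Term F) : Nat → Term F := fun y => if y = x then t else var y

theorem subst_bindVar_eq {x : Nat} {t : Term F} {u : Term F} (hx : x ∉ u.varsL) :
    u.subst (bindVar x t) = u := by
  have : u.subst (bindVar x t) = u.subst var := by
    refine subst_congr fun y hy => ?_
    have : y ≠ x := fun h => hx (h ▸ hy)
    simp [bindVar, this]
  rw [this, subst_id]

theorem subst_bindVar_subst {x : Nat} {t : Term F} {τ : Nat → Term F}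
    (hτ : τ x = t.subst τ) (u : Term F) :
    (u.subst (bindVar x t)).subst τ = u.subst τ := by
  rw [subst_subst]
  refine subst_congr fun y _ => ?_
  by_cases h : y = x
  · subst h; simp [bindVar, hτ]
  · simp [bindVar, h]

theorem unifAll_swapHead {τ : Nat → Term F} {a b : Term F} {E : List (Term F × Term F)}
    (h : UnifAll τ ((a, b) :: E)) : UnifAll τ ((b, a) :: E) := by
  intro e he
  rcases (List.mem_cons).1 he with rfl | he
  · exact (h (a, b) (by simp)).symm
  · exact h e (by simp [he])

theorem isMGUL_swapHead {σ : Nat → Term F} {a b : Term F} {E : List (Term F × Term F)}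
    (h : IsMGUL σ ((a, b) :: E)) : IsMGUL σ ((b, a) :: E) :=
  ⟨unifAll_swapHead h.1, fun τ hτ => h.2 τ (unifAll_swapHead hτ)⟩

theorem unifAll_elim {τ : Nat → Term F} {x : Nat} {t : Term F} {E : List (Term F × Term F)}
    (h : UnifAll τ ((var x, t) :: E)) :
    UnifAll τ (E.map fun e => (e.1.subst (bindVar x t), e.2.subst (bindVar x t))) := by
  have hx : τ x = t.subst τ := by simpa using h (var x, t) (by simp)
  intro e he
  simp only [List.mem_map] at he
  obtain ⟨e₀, he₀, rfl⟩ := he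
  simp only
  rw [subst_bindVar_subst hx, subst_bindVar_subst hx]
  exact h e₀ (by simp [he₀])

theorem mgu_elim {σ' : Nat → Term F} {x : Nat} {t : Term F} {E : List (Term F × Term F)}
    (hxt : x ∉ t.varsL)
    (h : IsMGUL σ' (E.map fun e => (e.1.subst (bindVar x t), e.2.subst (bindVar x t)))) :
    IsMGUL (fun y => (bindVar x t y).subst σ') ((var x, t) :: E) := by
  constructor
  · intro e he
    rcases (List.mem_cons).1 he with rfl | he
    · have h1 : ((var x : Term F).subst fun y => (bindVar x t y).subst σ') = t.subst σ' := by
        rw [subst_var]; simp only [bindVar, if_pos]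
      have h2 : (t.subst fun y => (bindVar x t y).subst σ') = t.subst σ' := by
        rw [← subst_subst, subst_bindVar_eq hxt]
      exact h1.trans h2.symm
    · have := h.1 (e.1.subst (bindVar x t), e.2.subst (bindVar x t))
        (List.mem_map_of_mem he)
      simp only at this
      rw [subst_subst, subst_subst] at this
      exact this
  · intro τ' hτ'
    have hx' : τ' x = t.subst τ' := by simpa using hτ' (var x, t) (by simp)
    obtain ⟨δ, hδ⟩ := h.2 τ' (unifAll_elim hτ')
    refine ⟨δ, fun y => ?_⟩
    by_cases hyx : y = x
    · subst hyx
      simp only [bindVar, if_pos rfl]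
      rw [subst_subst, hx']
      exact subst_congr fun z _ => hδ z
    · simp only [bindVar, if_neg hyx, subst_var]
      exact hδ y

theorem varsE_tail_subset (e : Term F × Term F) (E : List (Term F × Term F)) :
    varsE E ⊆ varsE (e :: E) := by
  intro n hn
  rw [mem_varsE] at hn ⊢
  obtain ⟨e', he', h⟩ := hn
  exact ⟨e', by simp [he'], h⟩

theorem card_varsE_elim_lt {x : Nat} {t : Term F} {E : List (Term F × Term F)}
    (hxt : x ∉ t.varsL) :
    (varsE (E.map fun e => (e.1.subst (bindVar x t), e.2.subst (bindVar x t)))).card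
      < (varsE ((var x, t) :: E)).card := by
  have hmem : ∀ n, n ∈ varsE (E.map fun e => (e.1.subst (bindVar x t), e.2.subst (bindVar x t))) →
      n ∈ varsE ((var x, t) :: E) ∧ n ≠ x := by
    intro n hn
    rw [mem_varsE] at hn
    obtain ⟨e, he, h⟩ := hn
    simp only [List.mem_map] at he
    obtain ⟨e₀, he₀, rfl⟩ := he
    have main : ∀ (u : Term F) (hu : u = e₀.1 ∨ u = e₀.2), n ∈ (u.subst (bindVar x t)).varsL →
        n ∈ varsE ((var x, t) :: E) ∧ n ≠ x := by
      intro u hu hn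
      rw [mem_varsL_subst] at hn
      obtain ⟨m, hmu, hm⟩ := hn
      simp only [bindVar] at hm
      by_cases hmx : m = x
      · rw [if_pos hmx] at hm
        exact ⟨mem_varsE.2 ⟨(var x, t), by simp, Or.inr hm⟩, fun h => hxt (h ▸ hm)⟩
      · rw [if_neg hmx] at hm
        simp only [varsL, List.mem_singleton] at hm
        subst hm
        refine ⟨mem_varsE.2 ⟨e₀, by simp [he₀], ?_⟩, hmx⟩
        rcases hu with rfl | rfl
        · exact Or.inl hmu
        · exact Or.inr hmu
    rcases h with h | h
    · exact main e₀.1 (Or.inl rfl) h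
    · exact main e₀.2 (Or.inr rfl) h
  have hsub : varsE (E.map fun e => (e.1.subst (bindVar x t), e.2.subst (bindVar x t)))
      ⊆ (varsE ((var x, t) :: E)).erase x := by
    intro n hn
    exact Finset.mem_erase.2 ⟨(hmem n hn).2, (hmem n hn).1⟩
  calc (varsE (E.map fun e => (e.1.subst (bindVar x t), e.2.subst (bindVar x t)))).card
      ≤ ((varsE ((var x, t) :: E)).erase x).card := Finset.card_le_card hsub
    _ < (varsE ((var x, t) :: E)).card := by
        apply Finset.card_erase_lt_of_mem
        exact mem_varsE.2 ⟨(var x, t), by simp, Or.inl (by simp [varsL])⟩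

theorem occurs_no_unifier {τ : Nat → Term F} {x : Nat} {g : F} {vs : List (Term F)}
    (hxt : x ∈ (Term.app g vs).varsL) (h : τ x = (Term.app g vs).subst τ) : False := by
  have hlt := size_subst_lt (σ := τ) (f := g) (ts := vs) hxt
  rw [← h] at hlt
  exact lt_irrefl _ hlt

theorem zip_sum_size {us vs : List (Term F)} (h : us.length = vs.length) :
    ((us.zip vs).map fun e => e.1.size + e.2.size).sum
      = (us.map size).sum + (vs.map size).sum := by
  induction us generalizing vs with
  | nil => cases vs with
    | nil => simp
    | cons v vs => simp at h
  | cons u us ih =>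
    cases vs with
    | nil => simp at h
    | cons v vs =>
      simp only [List.zip_cons_cons, List.map_cons, List.sum_cons]
      rw [ih (by simpa using h)]
      omega

theorem map_eq_of_zip {h : Term F → Term F} {us vs : List (Term F)}
    (hl : us.length = vs.length) (hz : ∀ e ∈ us.zip vs, h e.1 = h e.2) :
    us.map h = vs.map h := by
  induction us generalizing vs with
  | nil => cases vs with
    | nil => rfl
    | cons v vs => simp at hl
  | cons u us ih =>
    cases vs with
    | nil => simp at hl
    | cons v vs =>
      simp only [List.map_cons]
      rw [hz (u, v) (by simp), ih (by simpa using hl) fun e he => hz e (by simp [he])]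

theorem zip_of_map_eq {h : Term F → Term F} {us vs : List (Term F)}
    (hm : us.map h = vs.map h) : ∀ e ∈ us.zip vs, h e.1 = h e.2 := by
  induction us generalizing vs with
  | nil => simp
  | cons u us ih =>
    cases vs with
    | nil => simp
    | cons v vs =>
      simp only [List.map_cons, List.cons.injEq] at hm
      intro e he
      simp only [List.zip_cons_cons, List.mem_cons] at he
      rcases he with rfl | he
      · exact hm.1
      · exact ih hm.2 e he

theorem lex_helper {a a' b b' : Nat} (h1 : a' ≤ a) (h2 : b' < b) :
    Prod.Lex (· < ·) (· < ·) (a', b') (a, b) := by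
  rcases Nat.lt_or_ge a' a with h | h
  · exact Prod.Lex.left _ _ h
  · have : a' = a := le_antisymm h1 h
    subst this
    exact Prod.Lex.right _ h2

theorem varsE_swapHead (a b : Term F) (E : List (Term F × Term F)) :
    varsE ((b, a) :: E) = varsE ((a, b) :: E) := by
  ext n
  simp only [mem_varsE, List.mem_cons]
  constructor
  · rintro ⟨e, rfl | he, h⟩
    · exact ⟨(a, b), Or.inl rfl, h.symm⟩
    · exact ⟨e, Or.inr he, h⟩
  · rintro ⟨e, rfl | he, h⟩
    · exact ⟨(b, a), Or.inl rfl, h.symm⟩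
    · exact ⟨e, Or.inr he, h⟩

theorem varsE_zip_subset {f g : F} {us vs : List (Term F)} {E' : List (Term F × Term F)} :
    varsE (us.zip vs ++ E') ⊆ varsE ((Term.app f us, Term.app g vs) :: E') := by
  intro n hn
  rw [mem_varsE] at hn ⊢
  obtain ⟨e, he, h⟩ := hn
  rcases (List.mem_append).1 he with he | he
  · have h1 : e.1 ∈ us := (List.of_mem_zip he).1
    have h2 : e.2 ∈ vs := (List.of_mem_zip he).2
    refine ⟨(Term.app f us, Term.app g vs), by simp, ?_⟩
    rcases h with h | h
    · exact Or.inl (by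
        simp only [varsL_app, List.mem_flatten]
        exact ⟨e.1.varsL, List.mem_map_of_mem h1, h⟩)
    · exact Or.inr (by
        simp only [varsL_app, List.mem_flatten]
        exact ⟨e.2.varsL, List.mem_map_of_mem h2, h⟩)
  · exact ⟨e, by simp [he], h⟩

/-- helper -/
theorem sizeE_tail_lt (e : Term F × Term F) (E' : List (Term F × Term F)) :
    sizeE E' < sizeE (e :: E') := by
  simp only [sizeE, List.map_cons, List.sum_cons]
  have h1 := size_pos e.1
  omega

/-- The unification theorem: a unifiable list of equations has an mgu. -/
theorem exists_mgu_list : ∀ (E : List (Term F × Term F)),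
    (∃ τ, UnifAll τ E) → ∃ σ, IsMGUL σ E
  | [], _ => ⟨var, fun e he => by simp at he, fun τ _ => ⟨τ, fun x => by simp⟩⟩
  | (var x, t) :: E', hE => by
    by_cases hxt : x ∈ t.varsL
    · cases t with
      | var y =>
        have hxy : y = x := by simp [varsL] at hxt; omega
        subst hxy
        have hE' : ∃ τ, UnifAll τ E' := by
          obtain ⟨τ, hτ⟩ := hE
          exact ⟨τ, fun e he => hτ e (by simp [he])⟩
        obtain ⟨σ', hσ'⟩ := exists_mgu_list E' hE'
        exact ⟨σ', fun e he => by
            rcases (List.mem_cons).1 he with rfl | he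
            · rfl
            · exact hσ'.1 e he,
          fun τ' hτ' => hσ'.2 τ' fun e he => hτ' e (by simp [he])⟩
      | app g vs =>
        exfalso
        obtain ⟨τ, hτ⟩ := hE
        exact occurs_no_unifier hxt (by simpa using hτ (var x, Term.app g vs) (by simp))
    · obtain ⟨σ', hσ'⟩ := exists_mgu_list
        (E'.map fun e => (e.1.subst (bindVar x t), e.2.subst (bindVar x t)))
        (by obtain ⟨τ, hτ⟩ := hE; exact ⟨τ, unifAll_elim hτ⟩)
      exact ⟨_, mgu_elim hxt hσ'⟩
  | (Term.app f us, var y) :: E', hE => by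
    by_cases hys : y ∈ (Term.app f us).varsL
    · exfalso
      obtain ⟨τ, hτ⟩ := hE
      exact occurs_no_unifier hys
        (by simpa using (hτ (Term.app f us, var y) (by simp)).symm)
    · obtain ⟨σ', hσ'⟩ := exists_mgu_list
        (E'.map fun e =>
          (e.1.subst (bindVar y (Term.app f us)), e.2.subst (bindVar y (Term.app f us))))
        (by
          obtain ⟨τ, hτ⟩ := hE
          exact ⟨τ, unifAll_elim (unifAll_swapHead hτ)⟩)
      exact ⟨_, isMGUL_swapHead (mgu_elim hys hσ')⟩
  | (Term.app f us, Term.app g vs) :: E', hE => by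
    obtain ⟨τ, hτ⟩ := hE
    have hτst : (Term.app f us).subst τ = (Term.app g vs).subst τ :=
      hτ (Term.app f us, Term.app g vs) List.mem_cons_self
    have hfg : f = g ∧ us.map (subst τ) = vs.map (subst τ) := by
      simp only [subst_app, Term.app.injEq] at hτst
      exact ⟨hτst.1, by simpa using hτst.2⟩
    obtain ⟨rfl, hmaps⟩ := hfg
    have hlen : us.length = vs.length := by
      have := congrArg List.length hmaps; simpa using this
    obtain ⟨σ, hσ⟩ := exists_mgu_list (us.zip vs ++ E')
      ⟨τ, by
        intro e he
        rcases (List.mem_append).1 he with he | he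
        · exact zip_of_map_eq hmaps e he
        · exact hτ e (List.mem_cons_of_mem _ he)⟩
    refine ⟨σ, fun e he => ?_, fun τ' hτ' => hσ.2 τ' fun e he => ?_⟩
    · rcases (List.mem_cons).1 he with rfl | he
      · simp only [subst_app]
        congr 1
        exact map_eq_of_zip hlen fun e he => hσ.1 e (by simp [he])
      · exact hσ.1 e (by simp [he])
    · rcases (List.mem_append).1 he with he | he
      · have := hτ' (Term.app f us, Term.app f vs) (by simp)
        simp only [subst_app, Term.app.injEq, true_and] at this
        exact zip_of_map_eq this e he
      · exact hτ' e (by simp [he])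
termination_by E => ((varsE E).card, sizeE E)
decreasing_by
  · exact lex_helper (Finset.card_le_card (varsE_tail_subset _ _)) (sizeE_tail_lt _ _)
  · exact Prod.Lex.left _ _ (card_varsE_elim_lt hxt)
  · rw [varsE_swapHead (var y) (Term.app f us)]
    exact Prod.Lex.left _ _ (card_varsE_elim_lt hys)
  · refine lex_helper (Finset.card_le_card varsE_zip_subset) ?_
    simp only [sizeE, List.map_cons, List.sum_cons, List.map_append, List.sum_append]
    rw [zip_sum_size hlen, size_app, size_app]
    omega

theorem exists_isMGU {s t : Term F} (τ : Nat → Term F) (h : s.subst τ = t.subst τ) :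
    ∃ σ, s.subst σ = t.subst σ ∧ ∀ τ', s.subst τ' = t.subst τ' → ∃ δ, ∀ x, τ' x = (σ x).subst δ := by
  obtain ⟨σ, hσ⟩ := exists_mgu_list [(s, t)] ⟨τ, fun e he => by
    simp only [List.mem_singleton] at he; subst he; exact h⟩
  refine ⟨σ, hσ.1 (s, t) (by simp), fun τ' hτ' => hσ.2 τ' fun e he => ?_⟩
  simp only [List.mem_singleton] at he; subst he; exact hτ'

end Unif


abbrev Rule (F : Type) := Term F × Term F
abbrev TRS (F : Type) := Set (Rule F)

/-- `SubtermAt t p u` : the subterm of `t` at position `p` is `u`. -/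
inductive SubtermAt {F : Type} : Term F → List Nat → Term F → Prop
  | here (t : Term F) : SubtermAt t [] t
  | there {f : F} {ts : List (Term F)} {i : Nat} {u : Term F} {p : List Nat} {v : Term F} :
      ts[i]? = some u → SubtermAt u p v → SubtermAt (Term.app f ts) (i :: p) v

/-- `ReplaceAt t p v t'` : replacing the subterm of `t` at position `p` by `v` yields `t'`. -/
inductive ReplaceAt {F : Type} : Term F → List Nat → Term F → Term F → Prop
  | here (t u : Term F) : ReplaceAt t [] u u
  | there {f : F} {ts : List (Term F)} {i : Nat} {u : Term F} {p : List Nat} {v w : Term F} :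
      ts[i]? = some u → ReplaceAt u p v w →
      ReplaceAt (Term.app f ts) (i :: p) v (Term.app f (ts.set i w))

variable {F : Type}

/-- One rewrite step using the given rule (at some position, with some substitution). -/
def RuleStep (ρ : Rule F) (s t : Term F) : Prop :=
  ∃ (σ : Nat → Term F) (p : List Nat),
    SubtermAt s p (ρ.1.subst σ) ∧ ReplaceAt s p (ρ.2.subst σ) t

def OneStep (R : TRS F) (s t : Term F) : Prop := ∃ ρ ∈ R, RuleStep ρ s t

/-- A rewrite step at the root position. -/
def RootStep (R : TRS F) (s t : Term F) : Prop :=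
  ∃ ρ ∈ R, ∃ σ : Nat → Term F, s = ρ.1.subst σ ∧ t = ρ.2.subst σ

def StarRW (R : TRS F) : Term F → Term F → Prop := Relation.ReflTransGen (OneStep R)
def Plus (R : TRS F) : Term F → Term F → Prop := Relation.TransGen (OneStep R)
/-- Convertibility (the congruence / equational theory generated by `R`). -/
def Conv (R : TRS F) : Term F → Term F → Prop := Relation.EqvGen (OneStep R)
def Joinable (R : TRS F) (s t : Term F) : Prop := ∃ u, StarRW R s u ∧ StarRW R t u
def NormalForm (R : TRS F) (t : Term F) : Prop := ∀ u, ¬ OneStep R t u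
/-- `t` is the `R`-normal form of `s`. -/
def NFof (R : TRS F) (s t : Term F) : Prop := StarRW R s t ∧ NormalForm R t
def Terminating (R : TRS F) : Prop := WellFounded (fun a b : Term F => OneStep R b a)
def Confluent (R : TRS F) : Prop := ∀ s t u, StarRW R s t → StarRW R s u → Joinable R t u
def Convergent (R : TRS F) : Prop := Confluent R ∧ Terminating R

/-- every proper subterm is irreducible -/
def EpsIrreducible (R : TRS F) (t : Term F) : Prop :=
  ∀ p u, SubtermAt t p u → p ≠ [] → NormalForm R u

def InnermostRedex (R : TRS F) (t : Term F) : Prop :=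
  EpsIrreducible R t ∧ ¬ NormalForm R t

/-- Forward-closed, via the one-step-to-normal-form characterization. -/
def FCclosed (R : TRS F) : Prop :=
  ∀ t, InnermostRedex R t → ∀ u, NFof R t u → OneStep R t u

def Unifies (σ : Nat → Term F) (s t : Term F) : Prop := s.subst σ = t.subst σ

def IsMGU (σ : Nat → Term F) (s t : Term F) : Prop :=
  Unifies σ s t ∧ ∀ τ, Unifies τ s t → ∃ δ, ∀ x, τ x = (σ x).subst δ

def IsRenaming (ρ : Nat → Term F) : Prop :=
  ∃ f : Nat → Nat, Function.Injective f ∧ ∀ n, ρ n = Term.var (f n)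

/-- Redundancy criterion for an oriented equation `e` whose right-hand side is
reachable from its left-hand side: some proper subterm of the lhs is reducible. -/
def Redundant (R : TRS F) (e : Rule F) : Prop :=
  ∃ p u, p ≠ ([] : List Nat) ∧ SubtermAt e.1 p u ∧ ¬ NormalForm R u

/-- `R₁ ↝ R₂`: forward overlaps of rules of `R₂` (renamed apart) into
right-hand sides of rules of `R₁`, at non-variable positions, via an mgu. -/
def FStep (R₁ R₂ : TRS F) : TRS F :=
  { e | ∃ (l₁ r₁ l₂ r₂ : Term F) (ρ : Nat → Term F) (p : List Nat) (u : Term F)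
          (σ : Nat → Term F) (r₁' : Term F),
      (l₁, r₁) ∈ R₁ ∧ (l₂, r₂) ∈ R₂ ∧ IsRenaming ρ ∧
      SubtermAt r₁ p u ∧ ¬ u.IsVar ∧ IsMGU σ u (l₂.subst ρ) ∧
      ReplaceAt r₁ p (r₂.subst ρ) r₁' ∧ e = (l₁.subst σ, r₁'.subst σ) }

def FCiter (R : TRS F) : Nat → TRS F
  | 0 => R
  | k + 1 => FCiter R k ∪ { e | e ∈ FStep (FCiter R k) R ∧ ¬ Redundant (FCiter R k) e }

def FCinf (R : TRS F) : TRS F := ⋃ k, FCiter R k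

/-- Forward-closed, via the forward-closure construction: `FC(R) = R`. -/
def ForwardClosedFC (R : TRS F) : Prop := FCinf R = R

/-- `RHS(R)`: `R` together with the conclusions of right-hand-side critical
pair inferences (second rule renamed apart). -/
def RHSset (R : TRS F) : TRS F :=
  R ∪ { e | ∃ (s t u₀ v₀ : Term F) (ρ σ : Nat → Term F), (s, t) ∈ R ∧ (u₀, v₀) ∈ R ∧
        IsRenaming ρ ∧ IsMGU σ t (v₀.subst ρ) ∧
        s.subst σ ≠ (u₀.subst ρ).subst σ ∧ e = (s.subst σ, (u₀.subst ρ).subst σ) }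

/-- the (unordered) pairs of root symbols of two equations coincide -/
def RootPairSimilar (e₁ e₂ : Rule F) : Prop :=
  (e₁.1.root = e₂.1.root ∧ e₁.2.root = e₂.2.root) ∨
  (e₁.1.root = e₂.2.root ∧ e₁.2.root = e₂.1.root)

def QuasiDet (E : TRS F) : Prop :=
  (∀ e ∈ E, ¬ e.1.IsVar ∧ ¬ e.2.IsVar) ∧
  (∀ e ∈ E, e.1.root ≠ e.2.root) ∧
  (∀ e₁ ∈ E, ∀ e₂ ∈ E, e₁ ≠ e₂ → ¬ RootPairSimilar e₁ e₂)

def HasRootPairRepetition (E : TRS F) : Prop :=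
  ∃ e₁ ∈ E, ∃ e₂ ∈ E, e₁ ≠ e₂ ∧ RootPairSimilar e₁ e₂

def VarPreserving (R : TRS F) : Prop :=
  ∀ e ∈ R, ∀ n, n ∈ Term.varsL e.1 ↔ n ∈ Term.varsL e.2

def RightReduced (R : TRS F) : Prop := ∀ e ∈ R, NormalForm R e.2

def AlmostLeftReduced (R : TRS F) : Prop :=
  ¬ ∃ (l₁ r₁ l₂ r₂ : Term F) (p : List Nat) (u : Term F) (σ : Nat → Term F),
      (l₁, r₁) ∈ R ∧ (l₂, r₂) ∈ R ∧ p ≠ [] ∧ SubtermAt l₁ p u ∧ u = l₂.subst σ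

def NonSubtermCollapsing (R : TRS F) : Prop :=
  ¬ ∃ (t u : Term F) (p : List Nat), p ≠ [] ∧ SubtermAt u p t ∧ Conv R t u

structure LMSystem (R : TRS F) : Prop where
  convergent : Convergent R
  almostLeftReduced : AlmostLeftReduced R
  rightReduced : RightReduced R
  nonCollapsing : NonSubtermCollapsing R
  forwardClosed : FCclosed R
  quasiDet : QuasiDet (RHSset R)

/-- the symbol (function symbol or variable) of a term at a position, if defined -/
def labelAt {F : Type} : List Nat → Term F → Option (F ⊕ Nat)
  | [], t => some t.label
  | i :: p, Term.app _ ts => (ts[i]?).bind (labelAt p)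
  | _ :: _, Term.var _ => none

/-- outermost distinguishing position -/
def ODP (s t : Term F) (p : List Nat) : Prop :=
  (labelAt p s ≠ none ∨ labelAt p t ≠ none) ∧
  labelAt p s ≠ labelAt p t ∧
  ∀ q, q <+: p → q ≠ p → labelAt q s = labelAt q t



section MainProof

variable {F : Type}

theorem subtermAt_nil {t u : Term F} (h : SubtermAt t [] u) : u = t := by
  cases h; rfl

theorem replaceAt_nil {t v w : Term F} (h : ReplaceAt t [] v w) : w = v := by
  cases h; rfl

theorem oneStep_of_rule {R : TRS F} {l r : Term F} (h : (l, r) ∈ R) (σ : Nat → Term F) :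
    OneStep R (l.subst σ) (r.subst σ) :=
  ⟨(l, r), h, σ, [], SubtermAt.here _, ReplaceAt.here _ _⟩

/-- a one-step reduct of an ε̄-irreducible term is obtained by a root step -/
theorem root_step_of_eps {R : TRS F} {s v : Term F} (hs : EpsIrreducible R s)
    (h : OneStep R s v) :
    ∃ (l' r' : Term F) (σ : Nat → Term F), (l', r') ∈ R ∧ s = l'.subst σ ∧ v = r'.subst σ := by
  obtain ⟨ρ, hρR, σ, p, hsub, hrep⟩ := h
  cases p with
  | nil =>
    have h1 := subtermAt_nil hsub
    have h2 := replaceAt_nil hrep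
    exact ⟨ρ.1, ρ.2, σ, by simpa using hρR, h1.symm, h2⟩
  | cons i q =>
    exfalso
    have hnf := hs (i :: q) _ hsub (by simp)
    exact hnf _ (oneStep_of_rule (show (ρ.1, ρ.2) ∈ R by simpa using hρR) σ)

theorem star_eq_of_nf {R : TRS F} {s t : Term F} (h : StarRW R s t) (hs : NormalForm R s) :
    t = s := by
  induction h with
  | refl => rfl
  | tail _ hstep ih => exact absurd (ih ▸ hstep) (hs _)

theorem exists_nf {R : TRS F} (hT : Terminating R) (s : Term F) : ∃ u, NFof R s u := by
  classical
  induction s using WellFounded.induction hT with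
  | _ t ih =>
    by_cases h : NormalForm R t
    · exact ⟨t, Relation.ReflTransGen.refl, h⟩
    · simp only [NormalForm, not_forall, not_not] at h
      obtain ⟨v, hv⟩ := h
      obtain ⟨u, hu1, hu2⟩ := ih v hv
      exact ⟨u, Relation.ReflTransGen.head hv hu1, hu2⟩

theorem nf_unique {R : TRS F} (hC : Confluent R) {s u v : Term F}
    (hu : NFof R s u) (hv : NFof R s v) : u = v := by
  obtain ⟨w, h1, h2⟩ := hC s u v hu.1 hv.1
  rw [← star_eq_of_nf h1 hu.2, ← star_eq_of_nf h2 hv.2]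

theorem joinable_nf {R : TRS F} (hC : Confluent R) (hT : Terminating R) {s t u v : Term F}
    (hj : Joinable R s t) (hu : NFof R s u) (hv : NFof R t v) : u = v := by
  obtain ⟨w, h1, h2⟩ := hj
  obtain ⟨x, hx⟩ := exists_nf hT w
  have h3 : u = x := nf_unique hC hu ⟨h1.trans hx.1, hx.2⟩
  have h4 : v = x := nf_unique hC hv ⟨h2.trans hx.1, hx.2⟩
  rw [h3, h4]

theorem nonvar_app {t : Term F} (h : ¬ t.IsVar) : ∃ f ts, t = Term.app f ts := by
  cases t with
  | var n => exact absurd trivial h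
  | app f ts => exact ⟨f, ts, rfl⟩

/-- if `u` is not a variable and `u.subst σ = app f ss` then `u = app f us` for some `us`. -/
theorem subst_eq_app {u : Term F} {σ : Nat → Term F} {f : F} {ss : List (Term F)}
    (hnv : ¬ u.IsVar) (h : u.subst σ = Term.app f ss) :
    ∃ us, u = Term.app f us := by
  obtain ⟨f', us, rfl⟩ := nonvar_app hnv
  rw [Term.subst_app] at h
  injection h with h1 h2
  exact ⟨us, by rw [h1]⟩

theorem mem_lt_bound {L : List Nat} {x : Nat} (h : x ∈ L) : x < L.foldr max 0 + 1 := by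
  have : x ≤ L.foldr max 0 := by
    induction L with
    | nil => simp at h
    | cons a L ih =>
      rcases List.mem_cons.1 h with rfl | h
      · exact le_max_left _ _
      · exact le_trans (ih h) (le_max_right _ _)
  omega

end MainProof

/-- with a rule with root pair `(f, g)`, two epsilon-bar-irreducible terms
with these roots are joinable iff the first rewrites to the second in one step by that
rule. -/
theorem joinable_iff_one_step {F : Type} (R : TRS F) (hlm : LMSystem R)
    (l r : Term F) (hrule : (l, r) ∈ R)
    (f g : F) (hl : l.root = some f) (hr : r.root = some g)
    (ss ts : List (Term F))
    (hs : EpsIrreducible R (Term.app f ss)) (ht : EpsIrreducible R (Term.app g ts)) :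
    Joinable R (Term.app f ss) (Term.app g ts) ↔
      RuleStep (l, r) (Term.app f ss) (Term.app g ts) := by
  classical
  have hQ := hlm.quasiDet
  have hC : Confluent R := hlm.convergent.1
  have hTerm : Terminating R := hlm.convergent.2
  have hfg : f ≠ g := by
    intro hEq
    apply hQ.2.1 (l, r) (Set.mem_union_left _ hrule)
    show l.root = r.root
    rw [hl, hr, hEq]
  constructor
  · intro hj
    by_cases hSnf : NormalForm R (Term.app f ss) <;>
      by_cases hTnf : NormalForm R (Term.app g ts)
    · -- both in normal form: contradiction
      exfalso
      obtain ⟨w, h1, h2⟩ := hj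
      have e1 := star_eq_of_nf h1 hSnf
      have e2 := star_eq_of_nf h2 hTnf
      rw [e1] at e2
      injection e2 with h3 _
      exact hfg h3
    · -- s in normal form, t reducible: contradiction
      exfalso
      obtain ⟨u, hu⟩ := exists_nf hTerm (Term.app g ts)
      have hstep : OneStep R (Term.app g ts) u := hlm.forwardClosed _ ⟨ht, hTnf⟩ u hu
      obtain ⟨l₂, r₂, σ₂, h₂R, hT2, hu2⟩ := root_step_of_eps ht hstep
      have hSu : Term.app f ss = u :=
        joinable_nf hC hTerm hj ⟨Relation.ReflTransGen.refl, hSnf⟩ hu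
      have hnv := hQ.1 (l₂, r₂) (Set.mem_union_left _ h₂R)
      obtain ⟨us₂, hl₂⟩ := subst_eq_app (u := l₂) hnv.1 hT2.symm
      obtain ⟨vs₂, hr₂⟩ := subst_eq_app (u := r₂) hnv.2 ((hSu.trans hu2).symm)
      have hsim : RootPairSimilar (l, r) (l₂, r₂) := by
        refine Or.inr ⟨?_, ?_⟩
        · show l.root = r₂.root
          rw [hl, hr₂, Term.root]
        · show r.root = l₂.root
          rw [hr, hl₂, Term.root]
      by_cases heq : (l, r) = (l₂, r₂)
      · have hle : l = l₂ := congrArg Prod.fst heq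
        rw [hle, hl₂, Term.root] at hl
        exact hfg (Option.some.inj hl).symm
      · exact hQ.2.2 (l, r) (Set.mem_union_left _ hrule) (l₂, r₂)
          (Set.mem_union_left _ h₂R) heq hsim
    · -- s reducible, t in normal form: direct root step
      obtain ⟨u, hu⟩ := exists_nf hTerm (Term.app f ss)
      have hstep : OneStep R (Term.app f ss) u := hlm.forwardClosed _ ⟨hs, hSnf⟩ u hu
      obtain ⟨l₁, r₁, σ₁, h₁R, hS1, hu1⟩ := root_step_of_eps hs hstep
      have hTu : u = Term.app g ts :=
        (joinable_nf hC hTerm hj hu ⟨Relation.ReflTransGen.refl, hTnf⟩)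
      have hnv := hQ.1 (l₁, r₁) (Set.mem_union_left _ h₁R)
      obtain ⟨us₁, hl₁⟩ := subst_eq_app (u := l₁) hnv.1 hS1.symm
      obtain ⟨vs₁, hr₁⟩ := subst_eq_app (u := r₁) hnv.2 (hu1.symm.trans hTu)
      have hsim : RootPairSimilar (l, r) (l₁, r₁) := by
        refine Or.inl ⟨?_, ?_⟩
        · show l.root = l₁.root
          rw [hl, hl₁, Term.root]
        · show r.root = r₁.root
          rw [hr, hr₁, Term.root]
      by_cases heq : (l, r) = (l₁, r₁)
      · have hle : l = l₁ := congrArg Prod.fst heq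
        have hre : r = r₁ := congrArg Prod.snd heq
        refine ⟨σ₁, [], ?_, ?_⟩
        · show SubtermAt (Term.app f ss) [] (l.subst σ₁)
          rw [hle, ← hS1]
          exact SubtermAt.here _
        · show ReplaceAt (Term.app f ss) [] (r.subst σ₁) (Term.app g ts)
          rw [hre, ← hu1, hTu]
          exact ReplaceAt.here _ _
      · exact absurd hsim (hQ.2.2 (l, r) (Set.mem_union_left _ hrule) (l₁, r₁)
          (Set.mem_union_left _ h₁R) heq)
    · -- both reducible: go through the RHS critical pair
      obtain ⟨u, hu⟩ := exists_nf hTerm (Term.app f ss)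
      obtain ⟨u', hu'⟩ := exists_nf hTerm (Term.app g ts)
      have huu : u = u' := joinable_nf hC hTerm hj hu hu'
      subst huu
      have hstep1 : OneStep R (Term.app f ss) u := hlm.forwardClosed _ ⟨hs, hSnf⟩ u hu
      have hstep2 : OneStep R (Term.app g ts) u := hlm.forwardClosed _ ⟨ht, hTnf⟩ u hu'
      obtain ⟨l₁, r₁, σ₁, h₁R, hS1, hu1⟩ := root_step_of_eps hs hstep1
      obtain ⟨l₂, r₂, σ₂, h₂R, hT2, hu2⟩ := root_step_of_eps ht hstep2
      obtain ⟨N, hNl, hNr⟩ : ∃ N, (∀ x ∈ l₁.varsL, x < N) ∧ (∀ x ∈ r₁.varsL, x < N) :=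
        ⟨(l₁.varsL ++ r₁.varsL).foldr max 0 + 1,
          fun x hx => mem_lt_bound (List.mem_append_left _ hx),
          fun x hx => mem_lt_bound (List.mem_append_right _ hx)⟩
      set ρ : Nat → Term F := fun n => Term.var (n + N) with hρdef
      set τ : Nat → Term F := fun m => if m < N then σ₁ m else σ₂ (m - N) with hτdef
      have hρτ : ∀ w : Term F, (w.subst ρ).subst τ = w.subst σ₂ := by
        intro w
        rw [Term.subst_subst]
        refine Term.subst_congr fun x _ => ?_
        show (Term.var (x + N)).subst τ = σ₂ x
        rw [Term.subst_var, hτdef]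
        simp only [Nat.add_sub_cancel, if_neg (by omega : ¬ x + N < N)]
      have hl₁τ : l₁.subst τ = l₁.subst σ₁ :=
        Term.subst_congr fun x hx => by rw [hτdef]; exact if_pos (hNl x hx)
      have hr₁τ : r₁.subst τ = r₁.subst σ₁ :=
        Term.subst_congr fun x hx => by rw [hτdef]; exact if_pos (hNr x hx)
      have hunif : r₁.subst τ = (r₂.subst ρ).subst τ := by
        rw [hρτ, hr₁τ, ← hu1, ← hu2]
      obtain ⟨σ, hσ1, hσ2⟩ := Unif.exists_isMGU τ hunif
      obtain ⟨δ, hδ⟩ := hσ2 τ hunif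
      have hcomp : ∀ w : Term F, (w.subst σ).subst δ = w.subst τ := by
        intro w
        rw [Term.subst_subst]
        exact Term.subst_congr fun x _ => (hδ x).symm
      have hSe : (l₁.subst σ).subst δ = Term.app f ss := by
        rw [hcomp, hl₁τ, ← hS1]
      have hTe : ((l₂.subst ρ).subst σ).subst δ = Term.app g ts := by
        rw [hcomp, hρτ, ← hT2]
      have hne : l₁.subst σ ≠ (l₂.subst ρ).subst σ := by
        intro hEq
        have hST : Term.app f ss = Term.app g ts := by rw [← hSe, ← hTe, hEq]
        injection hST with h3 _
        exact hfg h3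
      have hmem : (l₁.subst σ, (l₂.subst ρ).subst σ) ∈ RHSset R :=
        Set.mem_union_right _
          ⟨l₁, r₁, l₂, r₂, ρ, σ, h₁R, h₂R,
            ⟨fun n => n + N, fun a b hab => by simp only at hab; omega, fun n => rfl⟩,
            ⟨hσ1, hσ2⟩, hne, rfl⟩
      have hnv₁ := hQ.1 (l₁, r₁) (Set.mem_union_left _ h₁R)
      have hnv₂ := hQ.1 (l₂, r₂) (Set.mem_union_left _ h₂R)
      obtain ⟨us₁, hl₁e⟩ := subst_eq_app (u := l₁) hnv₁.1 hS1.symm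
      obtain ⟨us₂, hl₂e⟩ := subst_eq_app (u := l₂) hnv₂.1 hT2.symm
      have hsim : RootPairSimilar (l, r) (l₁.subst σ, (l₂.subst ρ).subst σ) := by
        refine Or.inl ⟨?_, ?_⟩
        · show l.root = (l₁.subst σ).root
          rw [hl, hl₁e, Term.subst_app, Term.root]
        · show r.root = ((l₂.subst ρ).subst σ).root
          rw [hr, hl₂e, Term.subst_app, Term.subst_app, Term.root]
      by_cases heq : (l, r) = (l₁.subst σ, (l₂.subst ρ).subst σ)
      · have hle : l = l₁.subst σ := congrArg Prod.fst heq
        have hre : r = (l₂.subst ρ).subst σ := congrArg Prod.snd heq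
        refine ⟨δ, [], ?_, ?_⟩
        · show SubtermAt (Term.app f ss) [] (l.subst δ)
          rw [hle, hSe]
          exact SubtermAt.here _
        · show ReplaceAt (Term.app f ss) [] (r.subst δ) (Term.app g ts)
          rw [hre, hTe]
          exact ReplaceAt.here _ _
      · exact absurd hsim (hQ.2.2 (l, r) (Set.mem_union_left _ hrule) _ hmem heq)
  · intro hstep
    exact ⟨Term.app g ts,
      Relation.ReflTransGen.single ⟨(l, r), hrule, hstep⟩, Relation.ReflTransGen.refl⟩
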